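/- Let M = K(a,b,c,d) be a 4×4 K3 Markov matrix with x = a+b−c−d, y = a−b+c−d, z = a−b−c+d. If x > 0, y > 0 and z > 0, then the matrix Q := S · diag(0, log x, log y, log z) · S⁻¹ is a real matrix with K3 form satisfying exp(Q) = M. -/

import Mathlib

set_option maxHeartbeats 1000000

/-- The Kimura 3ST matrix `K(a,b,c,d)`. -/
def K {α : Type*} (a b c d : α) : Matrix (Fin 4) (Fin 4) α :=
  !![a, b, c, d;
     b, a, d, c;
     c, d, a, b;
     d, c, b, a]

/-- The 4×4 Hadamard matrix `S` (over ℝ). -/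
def S : Matrix (Fin 4) (Fin 4) ℝ :=
  !![1,  1,  1,  1;
     1,  1, -1, -1;
     1, -1,  1, -1;
     1, -1, -1,  1]

/-- A Markov matrix: nonnegative entries, rows sum to 1. -/
def IsMarkov {k : ℕ} (M : Matrix (Fin k) (Fin k) ℝ) : Prop :=
  (∀ i j, 0 ≤ M i j) ∧ ∀ i, ∑ j, M i j = 1

lemma S_mul_S : S * S = (4:ℝ) • 1 := by
  ext i j
  fin_cases i <;> fin_cases j <;>
    simp [S, Matrix.mul_apply, Fin.sum_univ_four, Matrix.one_apply,
      Matrix.vecHead, Matrix.vecTail] <;> norm_num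

lemma S_mul_smul_S : S * ((4:ℝ)⁻¹ • S) = 1 := by
  rw [Matrix.mul_smul, S_mul_S, smul_smul]
  norm_num

lemma S_inv : S⁻¹ = (4:ℝ)⁻¹ • S := Matrix.inv_eq_right_inv S_mul_smul_S

lemma S_isUnit : IsUnit S :=
  (Matrix.isUnit_iff_isUnit_det S).2
    (isUnit_iff_ne_zero.2 (Matrix.det_ne_zero_of_right_inverse S_mul_smul_S))

lemma diag_eq (p q r s : ℝ) :
    Matrix.diagonal ![p, q, r, s] = !![p,0,0,0; 0,q,0,0; 0,0,r,0; 0,0,0,s] := by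
  ext i j
  fin_cases i <;> fin_cases j <;>
    simp [Matrix.diagonal, Matrix.vecHead, Matrix.vecTail]

lemma conj_diag (p q r s : ℝ) :
    S * Matrix.diagonal ![p, q, r, s] * S⁻¹ =
      K ((p+q+r+s)/4) ((p+q-r-s)/4) ((p-q+r-s)/4) ((p-q-r+s)/4) := by
  rw [S_inv, Matrix.mul_smul, diag_eq]
  ext i j
  fin_cases i <;> fin_cases j <;>
    · simp [S, K, Matrix.mul_apply, Fin.sum_univ_four, Matrix.vecHead, Matrix.vecTail]
      ring

/-- If the eigenvalues `x, y, z` of a K3 Markov matrix `M = K(a,b,c,d)` are positive, then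
`Q := S · diag(0, log x, log y, log z) · S⁻¹` is a real matrix with K3 form and `exp Q = M`. -/
theorem stmt_6 (a b c d : ℝ) (hM : IsMarkov (K a b c d))
    (hx : 0 < a + b - c - d) (hy : 0 < a - b + c - d) (hz : 0 < a - b - c + d) :
    (∃ α β γ δ : ℝ,
      S * Matrix.diagonal
          ![0, Real.log (a + b - c - d), Real.log (a - b + c - d), Real.log (a - b - c + d)]
        * S⁻¹ = K α β γ δ) ∧
    NormedSpace.exp
      (S * Matrix.diagonal
          ![0, Real.log (a + b - c - d), Real.log (a - b + c - d), Real.log (a - b - c + d)]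
        * S⁻¹) = K a b c d := by
  have hsum : a + b + c + d = 1 := by
    have := hM.2 0
    simp [K, Fin.sum_univ_four] at this
    linarith
  refine ⟨⟨_, _, _, _, conj_diag _ _ _ _⟩, ?_⟩
  rw [Matrix.exp_conj S _ S_isUnit, Matrix.exp_diagonal]
  have eL : ∀ t : ℝ, 0 < t → NormedSpace.exp (Real.log t) = t := fun t ht => by
    rw [← Real.exp_eq_exp_ℝ, Real.exp_log ht]
  have hv : NormedSpace.exp
      ![(0:ℝ), Real.log (a + b - c - d), Real.log (a - b + c - d), Real.log (a - b - c + d)]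
      = ![1, a + b - c - d, a - b + c - d, a - b - c + d] := by
    funext i
    rw [Pi.coe_exp]
    fin_cases i <;>
      simp [Matrix.cons_val_succ, eL _ hx, eL _ hy, eL _ hz]
  rw [hv, conj_diag]
  have h1 : (1 + (a+b-c-d) + (a-b+c-d) + (a-b-c+d))/4 = a := by linarith
  have h2 : (1 + (a+b-c-d) - (a-b+c-d) - (a-b-c+d))/4 = b := by linarith
  have h3 : (1 - (a+b-c-d) + (a-b+c-d) - (a-b-c+d))/4 = c := by linarith
  have h4 : (1 - (a+b-c-d) - (a-b+c-d) + (a-b-c+d))/4 = d := by linarith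
  rw [h1, h2, h3, h4]
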